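/- Let Γ be a real 4×4 matrix such that ηΓ is symmetric, Γ² = Γ, tr Γ = 1, and xᵀ(ηΓ)x < 0 for some timelike vector x ∈ ℝ⁴. Then there exists a unit timelike vector u ∈ ℝ⁴ such that Γ = -u(ηu)ᵀ (i.e. Γ has mixed components Γ^α_β = -u^α u_β with u_β = (ηu)_β), and consequently xᵀ(ηΓ)x = -(⟨u,x⟩)² < 0 for every timelike vector x. -/

import Mathlib

open Matrix

/-- The Minkowski metric matrix η = diag(-1,1,1,1) in an orthonormal frame of ℝ⁴. -/
noncomputable def η : Matrix (Fin 4) (Fin 4) ℝ := Matrix.diagonal ![-1, 1, 1, 1]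

/-- Minkowski inner product ⟨x,y⟩ = xᵀ η y. -/
noncomputable def mink (x y : Fin 4 → ℝ) : ℝ := x ⬝ᵥ (η *ᵥ y)

/- ### Auxiliary lemmas -/

lemma aux_mul_vecMulVec {n : ℕ} (M : Matrix (Fin n) (Fin n) ℝ) (v w : Fin n → ℝ) :
    M * vecMulVec v w = vecMulVec (M *ᵥ v) w := by
  ext i j
  simp [mul_apply, vecMulVec_apply, mulVec, dotProduct, Finset.sum_mul, mul_assoc]

lemma aux_vecMulVec_mul {n : ℕ} (M : Matrix (Fin n) (Fin n) ℝ) (v w : Fin n → ℝ) :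
    vecMulVec v w * M = vecMulVec v (w ᵥ* M) := by
  ext i j
  simp [mul_apply, vecMulVec_apply, vecMul, dotProduct, Finset.mul_sum, mul_assoc]

lemma aux_vecMulVec_mulVec {n : ℕ} (v w x : Fin n → ℝ) :
    vecMulVec v w *ᵥ x = (w ⬝ᵥ x) • v := by
  ext i
  simp [vecMulVec_apply, mulVec, dotProduct, Finset.mul_sum, mul_assoc, mul_comm, mul_left_comm]

lemma aux_smul_vecMulVec {n : ℕ} (c : ℝ) (v w : Fin n → ℝ) :
    vecMulVec (c • v) w = c • vecMulVec v w := by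
  ext i j
  simp [vecMulVec_apply, mul_assoc]

lemma aux_vecMulVec_smul {n : ℕ} (c : ℝ) (v w : Fin n → ℝ) :
    vecMulVec v (c • w) = c • vecMulVec v w := by
  ext i j
  simp [vecMulVec_apply]
  ring

lemma aux_trace_vecMulVec {n : ℕ} (v w : Fin n → ℝ) :
    (vecMulVec v w).trace = v ⬝ᵥ w := by
  simp [Matrix.trace, vecMulVec_apply, dotProduct, Matrix.diag]

lemma hηη : η * η = 1 := by
  rw [η, Matrix.diagonal_mul_diagonal, ← Matrix.diagonal_one]
  refine congrArg Matrix.diagonal (funext fun i => ?_)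
  fin_cases i <;> norm_num

lemma hηsymm : ηᵀ = η := by
  simp [η, Matrix.diagonal_transpose]

lemma ηcancel (M : Matrix (Fin 4) (Fin 4) ℝ) : η * (η * M) = M := by
  rw [← Matrix.mul_assoc, hηη, Matrix.one_mul]

lemma ηcancelv (v : Fin 4 → ℝ) : η *ᵥ (η *ᵥ v) = v := by
  rw [Matrix.mulVec_mulVec, hηη, Matrix.one_mulVec]

/-- A symmetric matrix is self-adjoint for the plain dot product. -/
lemma aux_adj {n : ℕ} (M : Matrix (Fin n) (Fin n) ℝ) (hM : Mᵀ = M) (y z : Fin n → ℝ) :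
    (M *ᵥ y) ⬝ᵥ z = y ⬝ᵥ (M *ᵥ z) := by
  calc (M *ᵥ y) ⬝ᵥ z = z ⬝ᵥ (M *ᵥ y) := dotProduct_comm _ _
    _ = (z ᵥ* M) ⬝ᵥ y := dotProduct_mulVec _ _ _
    _ = (M *ᵥ z) ⬝ᵥ y := by conv_lhs => rw [← hM, Matrix.vecMul_transpose]
    _ = y ⬝ᵥ (M *ᵥ z) := dotProduct_comm _ _

lemma aux_vecMul_η (v : Fin 4 → ℝ) : v ᵥ* η = η *ᵥ v := by
  conv_lhs => rw [← hηsymm, Matrix.vecMul_transpose]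

/-- An idempotent real matrix with trace zero is zero. -/
lemma idem_trace_zero {n : ℕ} (P : Matrix (Fin n) (Fin n) ℝ) (h : P * P = P)
    (ht : P.trace = 0) : P = 0 := by
  set f := Matrix.toLin' P with hf
  have hff : f ∘ₗ f = f := by rw [hf, ← Matrix.toLin'_mul, h]
  obtain ⟨p, hp⟩ := (LinearMap.isProj_iff_isIdempotentElem f).mpr hff
  have htrf : LinearMap.trace ℝ _ f = Matrix.trace P := by
    rw [LinearMap.trace_eq_matrix_trace ℝ (Pi.basisFun ℝ (Fin n)) f, hf,
      ← Matrix.toLin_eq_toLin', LinearMap.toMatrix_toLin]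
  have h0 : (Module.finrank ℝ p : ℝ) = 0 := by rw [← hp.trace, htrf, ht]
  have hp0 : p = ⊥ := by
    have : Module.finrank ℝ p = 0 := by exact_mod_cast h0
    exact Submodule.finrank_eq_zero.mp this
  have hfz : f = 0 := by
    apply LinearMap.ext; intro w
    have := hp.map_mem w
    rw [hp0, Submodule.mem_bot] at this
    simp [this]
  have := congrArg Matrix.toLin'.symm (hf.symm.trans hfz)
  simpa using this

lemma mink_expand (a b : Fin 4 → ℝ) :
    mink a b = -(a 0 * b 0) + a 1 * b 1 + a 2 * b 2 + a 3 * b 3 := by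
  simp [mink, η, dotProduct, Matrix.mulVec_diagonal, Fin.sum_univ_four]

/-- A unit timelike vector is never Minkowski-orthogonal to a timelike vector. -/
lemma mink_ne_zero (u x : Fin 4 → ℝ) (hu : mink u u = -1) (hx : mink x x < 0) :
    mink u x ≠ 0 := by
  rw [mink_expand] at hu hx ⊢
  intro h
  have hcs : (u 1 * x 1 + u 2 * x 2 + u 3 * x 3) ^ 2 ≤
      (u 1 ^ 2 + u 2 ^ 2 + u 3 ^ 2) * (x 1 ^ 2 + x 2 ^ 2 + x 3 ^ 2) := by
    nlinarith [sq_nonneg (u 1 * x 2 - u 2 * x 1), sq_nonneg (u 1 * x 3 - u 3 * x 1),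
      sq_nonneg (u 2 * x 3 - u 3 * x 2)]
  have hBnn : (0:ℝ) ≤ u 1 ^ 2 + u 2 ^ 2 + u 3 ^ 2 := by positivity
  have hDnn : (0:ℝ) ≤ x 1 ^ 2 + x 2 ^ 2 + x 3 ^ 2 := by positivity
  have hCD : x 1 ^ 2 + x 2 ^ 2 + x 3 ^ 2 < x 0 ^ 2 := by nlinarith
  have hBD : (u 1 ^ 2 + u 2 ^ 2 + u 3 ^ 2) * (x 1 ^ 2 + x 2 ^ 2 + x 3 ^ 2) ≤
      (u 1 ^ 2 + u 2 ^ 2 + u 3 ^ 2) * (x 0 ^ 2) :=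
    mul_le_mul_of_nonneg_left (le_of_lt hCD) hBnn
  have hAC : (1 + (u 1 ^ 2 + u 2 ^ 2 + u 3 ^ 2)) * (x 0 ^ 2) =
      (u 1 * x 1 + u 2 * x 2 + u 3 * x 3) ^ 2 := by
    have h1 : u 0 ^ 2 = 1 + (u 1 ^ 2 + u 2 ^ 2 + u 3 ^ 2) := by nlinarith
    have h2 : u 0 * x 0 = u 1 * x 1 + u 2 * x 2 + u 3 * x 3 := by linarith
    calc (1 + (u 1 ^ 2 + u 2 ^ 2 + u 3 ^ 2)) * (x 0 ^ 2) = (u 0 * x 0) ^ 2 := by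
          rw [← h1]; ring
      _ = _ := by rw [h2]
  nlinarith [hcs, hBD, hAC, hDnn, hCD]

theorem stmt_0 (Γ : Matrix (Fin 4) (Fin 4) ℝ)
    (hsym : (η * Γ).IsSymm)
    (hproj : Γ * Γ = Γ)
    (htr : Γ.trace = 1)
    (hx : ∃ x : Fin 4 → ℝ, mink x x < 0 ∧ x ⬝ᵥ ((η * Γ) *ᵥ x) < 0) :
    ∃ u : Fin 4 → ℝ, mink u u = -1 ∧ Γ = -(vecMulVec u (η *ᵥ u)) ∧
      ∀ x : Fin 4 → ℝ, mink x x < 0 →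
        x ⬝ᵥ ((η * Γ) *ᵥ x) = -(mink u x) ^ 2 ∧ x ⬝ᵥ ((η * Γ) *ᵥ x) < 0 := by
  obtain ⟨x, hx1, hx2⟩ := hx
  set S := η * Γ with hSdef
  have hST : Sᵀ = S := hsym
  have hΓS : Γ = η * S := by rw [hSdef, ηcancel]
  have hSS : S * η * S = S := by
    rw [hSdef]
    calc η * Γ * η * (η * Γ) = η * Γ * (η * (η * Γ)) := by rw [Matrix.mul_assoc]
      _ = η * Γ * Γ := by rw [ηcancel]
      _ = η * (Γ * Γ) := by rw [Matrix.mul_assoc]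
      _ = η * Γ := by rw [hproj]
  set q := x ⬝ᵥ (S *ᵥ x) with hq
  have hqne : q ≠ 0 := ne_of_lt hx2
  set w := S *ᵥ x with hw
  have hw2 : S *ᵥ (η *ᵥ w) = w := by
    rw [hw, Matrix.mulVec_mulVec, Matrix.mulVec_mulVec, hSS]
  have hA : w ⬝ᵥ (η *ᵥ w) = q := by
    calc w ⬝ᵥ (η *ᵥ w) = (S *ᵥ x) ⬝ᵥ (η *ᵥ w) := by rw [hw]
      _ = x ⬝ᵥ (S *ᵥ (η *ᵥ w)) := aux_adj S hST x _
      _ = x ⬝ᵥ w := by rw [hw2]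
      _ = q := by rw [hq, hw]
  have hA' : (η *ᵥ w) ⬝ᵥ w = q := by rw [dotProduct_comm]; exact hA
  set W := vecMulVec w w with hW
  have hWη : W * η = vecMulVec w (η *ᵥ w) := by
    rw [hW, aux_vecMulVec_mul, aux_vecMul_η]
  -- Show S = q⁻¹ • W.
  have h1 : S * η * W = W := by
    rw [hW, Matrix.mul_assoc, aux_mul_vecMulVec, aux_mul_vecMulVec, hw2]
  have h2 : W * η * S = W := by
    rw [Matrix.mul_assoc, hW, aux_vecMulVec_mul]
    congr 1
    rw [← Matrix.mulVec_transpose, Matrix.transpose_mul, hηsymm, hST,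
      ← Matrix.mulVec_mulVec, hw2]
  have h3 : W * η * W = q • W := by
    rw [hWη, hW, aux_mul_vecMulVec, aux_vecMulVec_mulVec, hA', aux_smul_vecMulVec]
  have hScW : S = q⁻¹ • W := by
    set T := S - q⁻¹ • W with hTdef
    have hTT : T * η * T = T := by
      rw [hTdef]
      simp only [Matrix.sub_mul, Matrix.mul_sub, Matrix.smul_mul, Matrix.mul_smul,
        smul_sub, smul_smul, hSS, h1, h2, h3]
      have hc : q⁻¹ * (q⁻¹ * q) = q⁻¹ := by field_simp
      rw [hc]
      abel
    have hPidem : (η * T) * (η * T) = η * T := by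
      calc (η * T) * (η * T) = η * (T * (η * T)) := by rw [Matrix.mul_assoc]
        _ = η * (T * η * T) := by rw [Matrix.mul_assoc]
        _ = η * T := by rw [hTT]
    have hPtr : (η * T).trace = 0 := by
      rw [hTdef, Matrix.mul_sub, Matrix.mul_smul, Matrix.trace_sub, Matrix.trace_smul]
      have ht1 : (η * S).trace = 1 := by
        rw [← hΓS]; exact htr
      have ht2 : (η * W).trace = q := by
        rw [hW, aux_mul_vecMulVec, aux_trace_vecMulVec, hA']
      rw [ht1, ht2, smul_eq_mul, inv_mul_cancel₀ hqne, sub_self]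
    have hP0 : η * T = 0 := idem_trace_zero _ hPidem hPtr
    have hT0 : T = 0 := by
      have := congrArg (fun M => η * M) hP0
      simpa [ηcancel] using this
    rw [hTdef] at hT0
    rw [sub_eq_zero] at hT0
    exact hT0
  -- Construct u.
  have hqneg : (0:ℝ) < -q := by linarith
  set r := Real.sqrt (-q) with hr
  have hrpos : 0 < r := Real.sqrt_pos.mpr hqneg
  have hrne : r ≠ 0 := ne_of_gt hrpos
  have hr2 : r * r = -q := Real.mul_self_sqrt (le_of_lt hqneg)
  set u := r⁻¹ • (η *ᵥ w) with hu
  have hηu : η *ᵥ u = r⁻¹ • w := by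
    rw [hu, Matrix.mulVec_smul, ηcancelv]
  have hminkuu : mink u u = -1 := by
    rw [mink, hηu, hu, smul_dotProduct, dotProduct_smul, hA', smul_eq_mul, smul_eq_mul]
    field_simp
    linarith
  have hscal : -(r⁻¹ * r⁻¹) = q⁻¹ := by
    field_simp
    linarith
  have hΓeq : Γ = -(vecMulVec u (η *ᵥ u)) := by
    rw [hηu, hu, aux_smul_vecMulVec, aux_vecMulVec_smul, smul_smul]
    rw [hΓS, hScW, Matrix.mul_smul, hW, aux_mul_vecMulVec, ← hscal, neg_smul]
  refine ⟨u, hminkuu, hΓeq, fun y hy => ?_⟩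
  have hmuy : mink u y = r⁻¹ * (w ⬝ᵥ y) := by
    rw [mink, hu, smul_dotProduct, smul_eq_mul]
    congr 1
    calc (η *ᵥ w) ⬝ᵥ (η *ᵥ y) = w ⬝ᵥ (η *ᵥ (η *ᵥ y)) := aux_adj η hηsymm w _
      _ = w ⬝ᵥ y := by rw [ηcancelv]
  have hval : y ⬝ᵥ (S *ᵥ y) = -(mink u y) ^ 2 := by
    rw [hScW, Matrix.smul_mulVec, hW, aux_vecMulVec_mulVec, hmuy]
    rw [dotProduct_smul, dotProduct_smul, smul_eq_mul, smul_eq_mul, dotProduct_comm y w]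
    rw [← hscal]
    ring
  have hne : mink u y ≠ 0 := mink_ne_zero u y hminkuu hy
  refine ⟨hval, ?_⟩
  rw [hval]
  have h2 : 0 < (mink u y) ^ 2 :=
    lt_of_le_of_ne (sq_nonneg _) (Ne.symm (pow_ne_zero 2 hne))
  linarith
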